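/- arXiv:2209.03916 — 2 statements merged into one kernel-verified Lean document; each statement's English description precedes it below -/
import Mathlib

section
/- The optimal constant in the Agmon–Hörmander inequality on the circle, C_R = sup_{k≥0} Λ_R^k, satisfies: C_R = Λ_R^0 if J₀(R)J₁(R) ≥ 0, and C_R = Λ_R^1 if J₀(R)J₁(R) ≤ 0, where Λ_R^k = (R/2)J_k(R)² − (R/2)J_{k−1}(R)J_{k+1}(R). -/
open Real intervalIntegral

/-- Bessel function of the first kind of integer order, via Bessel's integral representation
(`J_{−1} = −J₁` with this convention). -/
noncomputable def besselJ (n : ℤ) (x : ℝ) : ℝ :=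
  (1 / π) * ∫ θ in (0:ℝ)..π, Real.cos (n * θ - x * Real.sin θ)

/-- `Λ_R^k = (R/2)J_k(R)² − (R/2)J_{k−1}(R)J_{k+1}(R)`. -/
noncomputable def LamR (R : ℝ) (k : ℕ) : ℝ :=
  R / 2 * besselJ k R ^ 2 - R / 2 * besselJ ((k : ℤ) - 1) R * besselJ ((k : ℤ) + 1) R

/-- The three-term recurrence for Bessel functions. -/
lemma besselJ_rec (n : ℤ) (x : ℝ) (hx : x ≠ 0) :
    besselJ (n - 1) x + besselJ (n + 1) x = (2 * n / x) * besselJ n x := by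
  have key : ∫ θ in (0:ℝ)..π, (((n:ℝ) - x * Real.cos θ) * Real.cos (n * θ - x * Real.sin θ)) = 0 := by
    have h := intervalIntegral.integral_eq_sub_of_hasDerivAt
      (f := fun θ : ℝ => Real.sin (n * θ - x * Real.sin θ))
      (f' := fun θ : ℝ => ((n : ℝ) - x * Real.cos θ) * Real.cos (n * θ - x * Real.sin θ))
      (a := (0:ℝ)) (b := π)
      (fun θ _ => by
        have h1 : HasDerivAt (fun θ : ℝ => (n : ℝ) * θ - x * Real.sin θ)
            ((n : ℝ) - x * Real.cos θ) θ := by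
          have h0 := (((hasDerivAt_id θ).const_mul (n:ℝ)).sub ((Real.hasDerivAt_sin θ).const_mul x))
          simp only [mul_one] at h0
          exact h0
        have h2 := (Real.hasDerivAt_sin _).comp θ h1
        exact h2.congr_deriv (by ring))
      (by apply Continuous.intervalIntegrable; fun_prop)
    rw [h]
    simp [Real.sin_int_mul_pi]
  have split : ∫ θ in (0:ℝ)..π, (((n:ℝ) - x * Real.cos θ) * Real.cos (n * θ - x * Real.sin θ))
      = (n:ℝ) * (∫ θ in (0:ℝ)..π, Real.cos (n * θ - x * Real.sin θ))
        - x * ∫ θ in (0:ℝ)..π, Real.cos θ * Real.cos (n * θ - x * Real.sin θ) := by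
    rw [← intervalIntegral.integral_const_mul, ← intervalIntegral.integral_const_mul,
      ← intervalIntegral.integral_sub (by apply Continuous.intervalIntegrable; fun_prop)
        (by apply Continuous.intervalIntegrable; fun_prop)]
    congr 1; ext θ; ring
  have prod : ∫ θ in (0:ℝ)..π, Real.cos θ * Real.cos (n * θ - x * Real.sin θ)
      = (1/2) * ((∫ θ in (0:ℝ)..π, Real.cos (((n:ℤ)+1) * θ - x * Real.sin θ))
          + ∫ θ in (0:ℝ)..π, Real.cos (((n:ℤ)-1) * θ - x * Real.sin θ)) := by
    rw [← intervalIntegral.integral_add (by apply Continuous.intervalIntegrable; fun_prop)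
        (by apply Continuous.intervalIntegrable; fun_prop),
      ← intervalIntegral.integral_const_mul]
    apply intervalIntegral.integral_congr
    intro θ _
    push_cast
    have e1 : ((n:ℝ)+1) * θ - x * Real.sin θ = θ + ((n:ℝ) * θ - x * Real.sin θ) := by ring
    have e2 : ((n:ℝ)-1) * θ - x * Real.sin θ = ((n:ℝ) * θ - x * Real.sin θ) - θ := by ring
    rw [e1, e2]
    simp only [Real.cos_add, Real.cos_sub, Real.sin_add, Real.sin_sub]
    ring
  have hpi : (π:ℝ) ≠ 0 := Real.pi_ne_zero
  unfold besselJ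
  rw [split] at key
  rw [prod] at key
  push_cast
  linear_combination (norm := skip) (-2 / (π * x)) * key
  field_simp
  ring

lemma besselJ_rec2 (n : ℤ) (x : ℝ) (hx : x ≠ 0) :
    besselJ (n + 2) x = (2 * ((n:ℝ) + 1) / x) * besselJ (n + 1) x - besselJ n x := by
  have h := besselJ_rec (n + 1) x hx
  have e : n + 1 - 1 = n := by ring
  have e2 : n + 1 + 1 = n + 2 := by ring
  rw [e, e2] at h
  push_cast at h
  linarith

lemma LamR_step (R : ℝ) (hR : 0 < R) (k : ℕ) : LamR R (k + 2) ≤ LamR R k := by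
  have hR' : R ≠ 0 := hR.ne'
  have eJm : besselJ ((k:ℤ) - 1) R
      = (2 * (k:ℝ) / R) * besselJ (k:ℤ) R - besselJ ((k:ℤ) + 1) R := by
    have := besselJ_rec (k:ℤ) R hR'; push_cast at this ⊢; linarith
  have eJ2 : besselJ ((k:ℤ) + 2) R
      = (2 * ((k:ℝ) + 1) / R) * besselJ ((k:ℤ) + 1) R - besselJ (k:ℤ) R :=
    besselJ_rec2 (k:ℤ) R hR'
  have eJ3 : besselJ ((k:ℤ) + 3) R
      = (2 * ((k:ℝ) + 2) / R) * besselJ ((k:ℤ) + 2) R - besselJ ((k:ℤ) + 1) R := by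
    have h := besselJ_rec2 ((k:ℤ) + 1) R hR'
    have e : (k:ℤ) + 1 + 2 = (k:ℤ) + 3 := by ring
    have e2 : (k:ℤ) + 1 + 1 = (k:ℤ) + 2 := by ring
    rw [e, e2] at h
    push_cast at h
    have e3 : 2 * ((k:ℝ) + 1 + 1) / R = 2 * ((k:ℝ) + 2) / R := by ring
    rw [e3] at h
    exact h
  have key : LamR R k - LamR R (k + 2)
      = 2 * ((k:ℝ) + 1) / R * besselJ ((k:ℤ) + 1) R ^ 2 := by
    unfold LamR
    have c1 : ((k + 2 : ℕ) : ℤ) = (k:ℤ) + 2 := by push_cast; ring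
    rw [c1, show (k:ℤ) + 2 - 1 = (k:ℤ) + 1 from by ring,
      show (k:ℤ) + 2 + 1 = (k:ℤ) + 3 from by ring, eJm, eJ3, eJ2]
    field_simp
    ring
  have hpos : 0 ≤ 2 * ((k:ℝ) + 1) / R * besselJ ((k:ℤ) + 1) R ^ 2 := by positivity
  linarith

lemma LamR_diff01 (R : ℝ) (hR : 0 < R) :
    LamR R 0 - LamR R 1 = besselJ 0 R * besselJ 1 R := by
  have hR' : R ≠ 0 := hR.ne'
  have hm1 : besselJ (-1) R = - besselJ 1 R := by
    have := besselJ_rec 0 R hR'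
    norm_num at this
    linarith
  have h2 : besselJ 2 R = (2 / R) * besselJ 1 R - besselJ 0 R := by
    have := besselJ_rec2 0 R hR'
    norm_num at this
    linarith
  unfold LamR
  norm_num
  rw [hm1, h2]
  field_simp
  ring

/-- The optimal Agmon–Hörmander constant on the circle, `C_R = sup_{k≥0} Λ_R^k`, equals
`Λ_R^0` when `J₀(R)J₁(R) ≥ 0`, and `Λ_R^1` when `J₀(R)J₁(R) ≤ 0`. -/
theorem agmon_hormander_optimal_constant (R : ℝ) (hR : 0 < R) :
    (0 ≤ besselJ 0 R * besselJ 1 R → (⨆ k : ℕ, LamR R k) = LamR R 0) ∧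
    (besselJ 0 R * besselJ 1 R ≤ 0 → (⨆ k : ℕ, LamR R k) = LamR R 1) := by
  have heven : ∀ m : ℕ, LamR R (2 * m) ≤ LamR R 0 := by
    intro m
    induction m with
    | zero => simp
    | succ n ih =>
      have e : 2 * (n + 1) = 2 * n + 2 := by ring
      rw [e]
      exact le_trans (LamR_step R hR (2 * n)) ih
  have hodd : ∀ m : ℕ, LamR R (2 * m + 1) ≤ LamR R 1 := by
    intro m
    induction m with
    | zero => simp
    | succ n ih =>
      have e : 2 * (n + 1) + 1 = (2 * n + 1) + 2 := by ring
      rw [e]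
      exact le_trans (LamR_step R hR (2 * n + 1)) ih
  have hdiff := LamR_diff01 R hR
  constructor
  · intro h
    have h10 : LamR R 1 ≤ LamR R 0 := by linarith
    have hbound : ∀ k : ℕ, LamR R k ≤ LamR R 0 := by
      intro k
      rcases Nat.even_or_odd k with ⟨m, hm⟩ | ⟨m, hm⟩
      · have : k = 2 * m := by omega
        rw [this]; exact heven m
      · rw [hm]
        exact le_trans (hodd m) h10
    refine le_antisymm (ciSup_le hbound) ?_
    exact le_ciSup ⟨LamR R 0, by rintro y ⟨k, rfl⟩; exact hbound k⟩ 0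
  · intro h
    have h01 : LamR R 0 ≤ LamR R 1 := by linarith
    have hbound : ∀ k : ℕ, LamR R k ≤ LamR R 1 := by
      intro k
      rcases Nat.even_or_odd k with ⟨m, hm⟩ | ⟨m, hm⟩
      · have : k = 2 * m := by omega
        rw [this]
        exact le_trans (heven m) h01
      · rw [hm]; exact hodd m
    refine le_antisymm (ciSup_le hbound) ?_
    exact le_ciSup ⟨LamR R 1, by rintro y ⟨k, rfl⟩; exact hbound k⟩ 1
end

section
/- For d odd, let p = 2(d+1)/(d−1), let n > 0 be an integer, and let Y_n be a spherical harmonic of degree n on S^d. Then ∫_{𝔻^{1+d}} |cos((d−1)T/2)|^{p−2} cos((d−1)T/2) cos(T(n+(d−1)/2)) Y_n(X) dT dS(X) = 0, where 𝔻^{1+d} = {(T, X) ∈ [−π,π] × S^d : R(X) < π − |T|} and R(X) is the polar angle of X. -/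
open MeasureTheory Real
open scoped NNReal ENNReal
set_option maxHeartbeats 1000000

/-- The surface measure on `S^d ⊂ ℝ^{d+1}`. -/
noncomputable def sphereMeasure (d : ℕ) : Measure (EuclideanSpace ℝ (Fin (d + 1))) :=
  (μH[d]).restrict (Metric.sphere (0 : EuclideanSpace ℝ (Fin (d + 1))) 1)

lemma sphere_hmeas_lt_top (d : ℕ) :
    μH[(d:ℝ)] (Metric.sphere (0 : EuclideanSpace ℝ (Fin (d+1))) 1) < ⊤ := by
  classical
  set r2 : ℝ := (d:ℝ)/((d:ℝ)+1) with hr2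
  have hd1 : (0:ℝ) < (d:ℝ)+1 := by positivity
  have hr2le : r2 ≤ 1 := by rw [hr2, div_le_one hd1]; linarith
  have hr2nonneg : (0:ℝ) ≤ r2 := by positivity
  have h1mr2 : 1 - r2 = 1/((d:ℝ)+1) := by rw [hr2]; field_simp; ring
  set s : Set (EuclideanSpace ℝ (Fin d)) := {y | ‖y‖^2 ≤ r2} with hs_def
  set g : Fin (d+1) → Bool → EuclideanSpace ℝ (Fin d) → EuclideanSpace ℝ (Fin (d+1)) :=
    fun i ε y => WithLp.toLp 2 (Fin.insertNth i ((if ε then (1:ℝ) else -1) * Real.sqrt (1 - ‖y‖^2))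
      (fun k => y k) : Fin (d+1) → ℝ) with hg_def
  -- pointwise formulas
  have hg_same : ∀ i ε y, g i ε y i = (if ε then (1:ℝ) else -1) * Real.sqrt (1 - ‖y‖^2) := by
    intro i ε y; simp [hg_def]
  have hg_above : ∀ i ε y k, g i ε y (i.succAbove k) = y k := by
    intro i ε y k; simp [hg_def]
  -- cover
  have hcover : Metric.sphere (0 : EuclideanSpace ℝ (Fin (d+1))) 1 ⊆
      ⋃ i : Fin (d+1), ⋃ ε : Bool, g i ε '' s := by
    intro x hx
    have hxnorm : ‖x‖ = 1 := by simpa using hx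
    have hsum : ∑ j, (x j)^2 = 1 := by
      have h := EuclideanSpace.norm_eq x
      rw [hxnorm] at h
      have h2 : Real.sqrt (∑ j, ‖x j‖^2) = 1 := h.symm
      have := congrArg (· ^ 2) h2
      simpa [Real.sq_sqrt (Finset.sum_nonneg fun j _ => sq_nonneg _), Real.norm_eq_abs,
        sq_abs] using this
    obtain ⟨i, -, hi⟩ := Finset.exists_max_image Finset.univ (fun j => (x j)^2)
      ⟨0, Finset.mem_univ _⟩
    have hibig : 1 ≤ ((d:ℝ)+1) * (x i)^2 := by
      calc (1:ℝ) = ∑ j, (x j)^2 := hsum.symm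
        _ ≤ (Finset.univ : Finset (Fin (d+1))).card • (x i)^2 :=
            Finset.sum_le_card_nsmul _ _ _ (fun j hj => hi j hj)
        _ = ((d:ℝ)+1) * (x i)^2 := by rw [Finset.card_univ, Fintype.card_fin, nsmul_eq_mul]; push_cast; ring
    set y : EuclideanSpace ℝ (Fin d) := WithLp.toLp 2 (fun k => x (i.succAbove k) : Fin d → ℝ) with hy_def
    have hysum : ∑ k, (y k)^2 = 1 - (x i)^2 := by
      have h := Fin.sum_univ_succAbove (fun j => (x j)^2) i
      rw [h] at hsum
      have h2 : ∑ k, (y k)^2 = ∑ k, (x (i.succAbove k))^2 := by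
        refine Finset.sum_congr rfl fun k _ => by rw [hy_def]
      rw [h2]; linarith
    have hynorm : ‖y‖^2 = 1 - (x i)^2 := by
      rw [EuclideanSpace.norm_eq, Real.sq_sqrt (Finset.sum_nonneg fun j _ => sq_nonneg _)]
      simpa [Real.norm_eq_abs, sq_abs] using hysum
    have hys : y ∈ s := by
      rw [hs_def, Set.mem_setOf_eq, hynorm, hr2, le_div_iff₀ hd1]
      nlinarith
    refine Set.mem_iUnion.2 ⟨i, Set.mem_iUnion.2 ⟨decide (0 ≤ x i), ⟨y, hys, ?_⟩⟩⟩
    have hsqrt : Real.sqrt (1 - ‖y‖^2) = |x i| := by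
      rw [hynorm, show 1 - (1 - (x i)^2) = (x i)^2 by ring, Real.sqrt_sq_eq_abs]
    have hcoef : (if decide (0 ≤ x i) then (1:ℝ) else -1) * Real.sqrt (1 - ‖y‖^2) = x i := by
      rw [hsqrt]
      by_cases h : 0 ≤ x i
      · simp [h, abs_of_nonneg h]
      · simp [h, abs_of_neg (lt_of_not_ge h)]
    show WithLp.toLp 2 (Fin.insertNth i _ _ : Fin (d+1) → ℝ) = x
    rw [hcoef]
    exact congrArg (WithLp.toLp 2) (Fin.insertNth_self_removeNth i x)
  -- Lipschitz bound
  set K : ℝ≥0 := ((2*d+3 : ℕ) : ℝ≥0) with hK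
  have hKr : ((K : ℝ≥0) : ℝ) = 2*(d:ℝ)+3 := by rw [hK]; push_cast; ring
  have hLip : ∀ i ε, LipschitzOnWith K (g i ε) s := by
    intro i ε
    rw [lipschitzOnWith_iff_dist_le_mul]
    intro y hy z hz
    have hy2 : ‖y‖^2 ≤ r2 := hy
    have hz2 : ‖z‖^2 ≤ r2 := hz
    set u : ℝ := 1 - ‖y‖^2 with hu
    set v : ℝ := 1 - ‖z‖^2 with hv
    have hu0 : 1/((d:ℝ)+1) ≤ u := by rw [hu]; linarith
    have hv0 : (0:ℝ) ≤ v := by rw [hv]; linarith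
    have hupos : (0:ℝ) < u := lt_of_lt_of_le (by positivity) hu0
    have hy1 : ‖y‖ ≤ 1 := by nlinarith [norm_nonneg y]
    have hz1 : ‖z‖ ≤ 1 := by nlinarith [norm_nonneg z]
    have hprod : (Real.sqrt u - Real.sqrt v) * (Real.sqrt u + Real.sqrt v) = u - v := by
      have h1 := Real.sq_sqrt hupos.le
      have h2 := Real.sq_sqrt hv0
      nlinarith [h1, h2]
    have hsum_ge : Real.sqrt (1/((d:ℝ)+1)) ≤ Real.sqrt u + Real.sqrt v := by
      have := Real.sqrt_le_sqrt hu0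
      linarith [Real.sqrt_nonneg v]
    have hsq_d : |Real.sqrt u - Real.sqrt v| * Real.sqrt (1/((d:ℝ)+1)) ≤ |u - v| := by
      calc |Real.sqrt u - Real.sqrt v| * Real.sqrt (1/((d:ℝ)+1))
          ≤ |Real.sqrt u - Real.sqrt v| * (Real.sqrt u + Real.sqrt v) :=
            mul_le_mul_of_nonneg_left hsum_ge (abs_nonneg _)
        _ = |(Real.sqrt u - Real.sqrt v) * (Real.sqrt u + Real.sqrt v)| := by
            rw [abs_mul, abs_of_nonneg (by positivity : (0:ℝ) ≤ Real.sqrt u + Real.sqrt v)]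
        _ = |u - v| := by rw [hprod]
    have habs : |u - v| ≤ 2 * dist y z := by
      have h1 : |‖z‖ - ‖y‖| ≤ ‖z - y‖ := abs_norm_sub_norm_le z y
      have h2 : ‖z - y‖ = dist y z := by rw [dist_comm, dist_eq_norm]
      have h3 : u - v = (‖z‖ - ‖y‖) * (‖z‖ + ‖y‖) := by rw [hu, hv]; ring
      rw [h3, abs_mul, abs_of_nonneg (by positivity : (0:ℝ) ≤ ‖z‖ + ‖y‖)]
      have h4 : |‖z‖ - ‖y‖| ≤ dist y z := h2 ▸ h1
      nlinarith [abs_nonneg (‖z‖ - ‖y‖), dist_nonneg (x := y) (y := z), norm_nonneg y, norm_nonneg z]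
    have hc : |Real.sqrt u - Real.sqrt v| ≤ 2 * Real.sqrt ((d:ℝ)+1) * dist y z := by
      have hmul : Real.sqrt (1/((d:ℝ)+1)) * Real.sqrt ((d:ℝ)+1) = 1 := by
        rw [← Real.sqrt_mul (by positivity), one_div, inv_mul_cancel₀ (ne_of_gt hd1),
          Real.sqrt_one]
      calc |Real.sqrt u - Real.sqrt v|
          = |Real.sqrt u - Real.sqrt v| * (Real.sqrt (1/((d:ℝ)+1)) * Real.sqrt ((d:ℝ)+1)) := by
            rw [hmul, mul_one]
        _ = (|Real.sqrt u - Real.sqrt v| * Real.sqrt (1/((d:ℝ)+1))) * Real.sqrt ((d:ℝ)+1) := by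
            ring
        _ ≤ |u - v| * Real.sqrt ((d:ℝ)+1) :=
            mul_le_mul_of_nonneg_right hsq_d (Real.sqrt_nonneg _)
        _ ≤ (2 * dist y z) * Real.sqrt ((d:ℝ)+1) :=
            mul_le_mul_of_nonneg_right habs (Real.sqrt_nonneg _)
        _ = 2 * Real.sqrt ((d:ℝ)+1) * dist y z := by ring
    -- distance computation
    have hdist_i : dist (g i ε y i) (g i ε z i) = |Real.sqrt u - Real.sqrt v| := by
      rw [hg_same, hg_same, Real.dist_eq, ← hu, ← hv]
      cases ε <;> simp <;>
        rw [show -Real.sqrt u + Real.sqrt v = -(Real.sqrt u - Real.sqrt v) by ring, abs_neg]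
    have hdistsq : dist (g i ε y) (g i ε z) ^ 2 = |Real.sqrt u - Real.sqrt v|^2 + dist y z ^ 2 := by
      rw [EuclideanSpace.dist_eq (g i ε y) (g i ε z),
        Real.sq_sqrt (Finset.sum_nonneg fun j _ => sq_nonneg _)]
      rw [Fin.sum_univ_succAbove (fun j => dist (g i ε y j) (g i ε z j) ^ 2) i]
      have h2 : ∀ k, dist (g i ε y (i.succAbove k)) (g i ε z (i.succAbove k)) = dist (y k) (z k) := by
        intro k; rw [hg_above, hg_above]
      rw [hdist_i]
      congr 1
      rw [EuclideanSpace.dist_eq y z, Real.sq_sqrt (Finset.sum_nonneg fun j _ => sq_nonneg _)]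
      exact Finset.sum_congr rfl fun k _ => by rw [h2]
    have hfin : dist (g i ε y) (g i ε z) ^ 2 ≤ ((K:ℝ) * dist y z)^2 := by
      rw [hdistsq, hKr]
      have hs1 : Real.sqrt ((d:ℝ)+1) ^ 2 = (d:ℝ)+1 := Real.sq_sqrt (by positivity)
      have h2 : |Real.sqrt u - Real.sqrt v|^2 ≤ (2 * Real.sqrt ((d:ℝ)+1) * dist y z)^2 :=
        pow_le_pow_left₀ (abs_nonneg _) hc 2
      nlinarith [h2, hs1, sq_nonneg (dist y z), Nat.cast_nonneg (α := ℝ) d,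
        mul_nonneg (mul_nonneg (Nat.cast_nonneg (α := ℝ) d) (Nat.cast_nonneg (α := ℝ) d)) (sq_nonneg (dist y z)),
        mul_nonneg (Nat.cast_nonneg (α := ℝ) d) (sq_nonneg (dist y z))]
    have := Real.sqrt_le_sqrt hfin
    rwa [Real.sqrt_sq dist_nonneg, Real.sqrt_sq (by positivity)] at this
  -- put it together
  refine lt_of_le_of_lt (measure_mono hcover) ?_
  refine lt_of_le_of_lt (measure_iUnion_le _) ?_
  rw [tsum_fintype]
  refine ENNReal.sum_lt_top.2 fun i _ => ?_
  refine lt_of_le_of_lt (measure_iUnion_le _) ?_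
  rw [tsum_fintype]
  refine ENNReal.sum_lt_top.2 fun ε _ => ?_
  have hsfin : μH[(d:ℝ)] s < ⊤ := by
    have hsub : s ⊆ Metric.closedBall (0 : EuclideanSpace ℝ (Fin d)) 1 := by
      intro y hy
      have : ‖y‖^2 ≤ r2 := hy
      rw [Metric.mem_closedBall, dist_zero_right]
      nlinarith [norm_nonneg y]
    refine lt_of_le_of_lt (measure_mono hsub) ?_
    have h := (isCompact_closedBall (0 : EuclideanSpace ℝ (Fin d)) 1).measure_lt_top
      (μ := μH[(Module.finrank ℝ (EuclideanSpace ℝ (Fin d)) : ℝ)])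
    simpa [finrank_euclideanSpace_fin] using h
  refine lt_of_le_of_lt ((hLip i ε).hausdorffMeasure_image_le (by positivity : (0:ℝ) ≤ (d:ℝ))) ?_
  exact ENNReal.mul_lt_top (ENNReal.rpow_lt_top_of_nonneg (by positivity) ENNReal.coe_ne_top) hsfin

/-- For odd `d`, `p = 2(d+1)/(d−1)`, `n > 0`, and `Y_n` a spherical harmonic of degree `n`
on `S^d` (here abstracted by its parity `Y_n(−X) = (−1)ⁿ Y_n(X)` and mean-zero property),
the integral over the Penrose diamond `𝔻^{1+d} = {(T,X) : R(X) < π − |T|}` of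
`|cos((d−1)T/2)|^{p−2} cos((d−1)T/2) cos(T(n+(d−1)/2)) Y_n(X)` vanishes, where
`R(X) = arccos(X₀)` is the polar angle of `X`. -/
theorem diamond_integral_vanishes (d : ℕ) (hd : 2 ≤ d) (hodd : Odd d)
    (n : ℕ) (hn : 0 < n)
    (Y : EuclideanSpace ℝ (Fin (d + 1)) → ℝ) (hYc : Continuous Y)
    (hYanti : ∀ X, Y (-X) = (-1 : ℝ) ^ n * Y X)
    (hYmean : ∫ X, Y X ∂(sphereMeasure d) = 0) :
    ∫ T in Set.Icc (-π) π,
      (∫ X, (if Real.arccos (X 0) < π - |T| then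
          |Real.cos (((d:ℝ) - 1) / 2 * T)| ^ (2 * ((d:ℝ) + 1) / ((d:ℝ) - 1) - 2)
            * Real.cos (((d:ℝ) - 1) / 2 * T)
            * Real.cos (T * ((n:ℝ) + ((d:ℝ) - 1) / 2))
            * Y X
        else 0) ∂(sphereMeasure d)) = 0 := by
  obtain ⟨m, hm⟩ := hodd
  have hd3 : 3 ≤ d := by omega
  have hdR : (3:ℝ) ≤ (d:ℝ) := by exact_mod_cast hd3
  have hmR : (d:ℝ) = 2*(m:ℝ)+1 := by exact_mod_cast hm
  have hm2 : ((d:ℝ) - 1)/2 = (m:ℝ) := by rw [hmR]; ring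
  set α : ℝ := 2 * ((d:ℝ) + 1) / ((d:ℝ) - 1) - 2 with hα
  have hα0 : 0 ≤ α := by
    rw [hα, sub_nonneg, le_div_iff₀ (by linarith : (0:ℝ) < (d:ℝ)-1)]; linarith
  set F : ℝ → ℝ := fun T => |Real.cos ((m:ℝ) * T)| ^ α * Real.cos ((m:ℝ) * T)
      * Real.cos (T * ((n:ℝ) + (m:ℝ))) with hF
  set μ : Measure (EuclideanSpace ℝ (Fin (d+1))) := sphereMeasure d with hμ
  have hYmean' : ∫ X, Y X ∂μ = 0 := by rw [hμ]; exact hYmean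
  haveI : IsFiniteMeasure μ := by
    constructor
    rw [hμ, sphereMeasure, Measure.restrict_apply_univ]
    exact sphere_hmeas_lt_top d
  have hRcont : Continuous (fun X : EuclideanSpace ℝ (Fin (d+1)) => Real.arccos (X 0)) :=
    Real.continuous_arccos.comp ((continuous_apply (0 : Fin (d+1))).comp
      (PiLp.continuous_ofLp (p := 2) (β := fun _ : Fin (d+1) => ℝ)))
  obtain ⟨C, hC⟩ := (isCompact_sphere (0 : EuclideanSpace ℝ (Fin (d+1)))
    1).exists_bound_of_continuousOn hYc.continuousOn
  set C0 : ℝ := max C 0 with hC0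
  have hC0nonneg : 0 ≤ C0 := le_max_right _ _
  have hCs : ∀ x ∈ Metric.sphere (0 : EuclideanSpace ℝ (Fin (d+1))) 1, |Y x| ≤ C0 := fun x hx =>
    le_trans (by simpa [Real.norm_eq_abs] using hC x hx) (le_max_left _ _)
  have hae_sphere : ∀ᵐ x ∂μ, x ∈ Metric.sphere (0 : EuclideanSpace ℝ (Fin (d+1))) 1 := by
    rw [hμ, sphereMeasure]; exact ae_restrict_mem Metric.isClosed_sphere.measurableSet
  -- integrability of truncated integrands
  have hIntP : ∀ (Z : EuclideanSpace ℝ (Fin (d+1)) → ℝ), Continuous Z →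
      (∀ x, |Z x| ≤ |Y x|) → ∀ (P : EuclideanSpace ℝ (Fin (d+1)) → Prop) [DecidablePred P],
      MeasurableSet {x | P x} → Integrable (fun X => if P X then Z X else 0) μ := by
    intro Z hZc hZb P _ hP
    refine Integrable.mono' (integrable_const C0)
      ((Measurable.ite hP hZc.measurable measurable_const).aestronglyMeasurable) ?_
    filter_upwards [hae_sphere] with x hx
    rw [Real.norm_eq_abs]
    by_cases h : P x
    · rw [if_pos h]; exact le_trans (hZb x) (hCs x hx)
    · rw [if_neg h, abs_zero]; exact hC0nonneg
  have hIlt : ∀ t : ℝ, Integrable (fun X => if Real.arccos (X 0) < t then Y X else 0) μ :=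
    fun t => hIntP Y hYc (fun x => le_refl _) _ (hRcont.measurable measurableSet_Iio)
  have hIle : ∀ t : ℝ, Integrable (fun X => if Real.arccos (X 0) ≤ t then Y X else 0) μ :=
    fun t => hIntP Y hYc (fun x => le_refl _) _ (hRcont.measurable measurableSet_Iic)
  have hInotle : ∀ t : ℝ, Integrable (fun X => if ¬ (Real.arccos (X 0) ≤ t) then Y X else 0) μ :=
    fun t => hIntP Y hYc (fun x => le_refl _) _ ((hRcont.measurable measurableSet_Iic).compl)
  have hIeq : ∀ t : ℝ, Integrable (fun X => if Real.arccos (X 0) = t then Y X else 0) μ :=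
    fun t => hIntP Y hYc (fun x => le_refl _) _ (hRcont.measurable (measurableSet_singleton t))
  -- the cap integrals
  set G : ℝ → ℝ := fun t => ∫ X, (if Real.arccos (X 0) < t then Y X else 0) ∂μ with hG
  set H : ℝ → ℝ := fun t => ∫ X, (if Real.arccos (X 0) ≤ t then Y X else 0) ∂μ with hH
  -- negation symmetry
  have hpre : (fun X : EuclideanSpace ℝ (Fin (d+1)) => -X) ⁻¹' (Metric.sphere 0 1)
      = Metric.sphere 0 1 := by
    ext x; simp
  have hmp : MeasurePreserving (fun X : EuclideanSpace ℝ (Fin (d+1)) => -X) μ μ := by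
    have h1 : MeasurePreserving (fun X : EuclideanSpace ℝ (Fin (d+1)) => -X)
        (μH[(d:ℝ)]) (μH[(d:ℝ)]) :=
      (LinearIsometryEquiv.neg ℝ
        (E := EuclideanSpace ℝ (Fin (d+1)))).toIsometryEquiv.measurePreserving_hausdorffMeasure _
    refine ⟨measurable_neg, ?_⟩
    rw [hμ, sphereMeasure]
    conv_lhs => rw [← hpre]
    rw [← Measure.restrict_map measurable_neg Metric.isClosed_sphere.measurableSet, h1.map_eq]
  have hcomp : ∀ f : EuclideanSpace ℝ (Fin (d+1)) → ℝ, ∫ X, f (-X) ∂μ = ∫ X, f X ∂μ :=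
    fun f => hmp.integral_comp
      (Homeomorph.neg (EuclideanSpace ℝ (Fin (d+1)))).measurableEmbedding f
  -- the key reflection identity
  have hGH : ∀ t : ℝ, G t = (-1:ℝ)^(n+1) * H (π - t) := by
    intro t
    have h1 := (hcomp (fun X => if Real.arccos (X 0) < t then Y X else 0)).symm
    have h2 : ∀ X : EuclideanSpace ℝ (Fin (d+1)),
        (if Real.arccos ((-X) 0) < t then Y (-X) else 0)
          = (-1:ℝ)^n * (if ¬ (Real.arccos (X 0) ≤ π - t) then Y X else 0) := by
      intro X
      have hneg0 : (-X) 0 = -(X 0) := rfl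
      rw [hneg0, Real.arccos_neg, hYanti]
      by_cases h : π - Real.arccos (X 0) < t
      · rw [if_pos h, if_pos (by intro h'; linarith)]
      · rw [if_neg h,
            if_neg (not_not_intro (by push_neg at h; linarith : Real.arccos (X 0) ≤ π - t)),
            mul_zero]
    rw [hG]
    simp only
    rw [h1]
    calc ∫ X, (if Real.arccos ((-X) 0) < t then Y (-X) else 0) ∂μ
        = ∫ X, (-1:ℝ)^n * (if ¬ (Real.arccos (X 0) ≤ π - t) then Y X else 0) ∂μ :=
          integral_congr_ae (Filter.Eventually.of_forall h2)
      _ = (-1:ℝ)^n * ∫ X, (if ¬ (Real.arccos (X 0) ≤ π - t) then Y X else 0) ∂μ :=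
          integral_const_mul _ _
      _ = (-1:ℝ)^(n+1) * H (π - t) := by
          have hsplit : (∫ X, (if Real.arccos (X 0) ≤ π - t then Y X else 0) ∂μ)
              + (∫ X, (if ¬ (Real.arccos (X 0) ≤ π - t) then Y X else 0) ∂μ) = 0 := by
            rw [← integral_add (hIle _) (hInotle _)]
            refine Eq.trans (integral_congr_ae (Filter.Eventually.of_forall fun X => ?_)) hYmean'
            by_cases h : Real.arccos (X 0) ≤ π - t <;> simp [h]
          have hH2 : (∫ X, (if ¬ (Real.arccos (X 0) ≤ π - t) then Y X else 0) ∂μ)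
              = - H (π - t) := by
            rw [hH]; simp only; linarith
          rw [hH2, pow_succ]; ring
  -- a.e. coincidence of G and H
  have hGHae : ∀ᵐ t : ℝ, G t = H t := by
    have hcnt : Set.Countable {t : ℝ | 0 < μ {X | Real.arccos (X 0) = t}} :=
      Measure.countable_meas_level_set_pos hRcont.measurable
    have hsub : {t : ℝ | ¬ G t = H t} ⊆ {t : ℝ | 0 < μ {X | Real.arccos (X 0) = t}} := by
      intro t ht
      by_contra hpos
      apply ht
      have hzero : μ {X | Real.arccos (X 0) = t} = 0 := by
        simpa [not_lt, le_zero_iff] using hpos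
      have hslice : ∫ X, (if Real.arccos (X 0) = t then Y X else 0) ∂μ = 0 := by
        have hind : (fun X : EuclideanSpace ℝ (Fin (d+1)) =>
            if Real.arccos (X 0) = t then Y X else 0)
            = Set.indicator {X | Real.arccos (X 0) = t} Y := by
          funext X
          by_cases h : Real.arccos (X 0) = t <;> simp [Set.indicator_apply, h]
        rw [hind, integral_indicator (show MeasurableSet
          {X : EuclideanSpace ℝ (Fin (d+1)) | Real.arccos (X 0) = t} from
          hRcont.measurable (measurableSet_singleton t))]
        rw [Measure.restrict_eq_zero.mpr hzero]
        exact integral_zero_measure _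
      have hptwise : ∀ X : EuclideanSpace ℝ (Fin (d+1)),
          (if Real.arccos (X 0) ≤ t then Y X else 0)
          = (if Real.arccos (X 0) < t then Y X else 0)
            + (if Real.arccos (X 0) = t then Y X else 0) := by
        intro X
        rcases lt_trichotomy (Real.arccos (X 0)) t with h | h | h
        · rw [if_pos h.le, if_pos h, if_neg (ne_of_lt h), add_zero]
        · rw [if_pos h.le, if_neg (by rw [h]; exact lt_irrefl t), if_pos h, zero_add]
        · rw [if_neg (not_le.2 h), if_neg (not_lt.2 h.le), if_neg (ne_of_gt h), add_zero]
      have hHt : H t = G t + ∫ X, (if Real.arccos (X 0) = t then Y X else 0) ∂μ := by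
        rw [hH, hG]
        simp only
        rw [← integral_add (hIlt t) (hIeq t)]
        exact integral_congr_ae (Filter.Eventually.of_forall hptwise)
      rw [hHt, hslice, add_zero]
    rw [ae_iff]
    exact measure_mono_null hsub (hcnt.measure_zero _)
  -- measurability of H
  have hHmeas : Measurable H := by
    have hYpb : ∀ x, |max (Y x) 0| ≤ |Y x| := fun x => by
      rw [abs_of_nonneg (le_max_right _ _)]; exact max_le (le_abs_self _) (abs_nonneg _)
    have hYmb : ∀ x, |max (-(Y x)) 0| ≤ |Y x| := fun x => by
      rw [abs_of_nonneg (le_max_right _ _)]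
      exact max_le (by rw [← abs_neg]; exact le_abs_self _) (abs_nonneg _)
    set Hp : ℝ → ℝ := fun t => ∫ X, (if Real.arccos (X 0) ≤ t then max (Y X) 0 else 0) ∂μ with hHp
    set Hm : ℝ → ℝ := fun t => ∫ X, (if Real.arccos (X 0) ≤ t then max (-(Y X)) 0 else 0) ∂μ
      with hHm
    have hIp : ∀ t : ℝ, Integrable (fun X => if Real.arccos (X 0) ≤ t then max (Y X) 0 else 0) μ :=
      fun t => hIntP _ (hYc.max continuous_const) hYpb _ (hRcont.measurable measurableSet_Iic)
    have hIm : ∀ t : ℝ,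
        Integrable (fun X => if Real.arccos (X 0) ≤ t then max (-(Y X)) 0 else 0) μ :=
      fun t => hIntP _ (hYc.neg.max continuous_const) hYmb _
        (hRcont.measurable measurableSet_Iic)
    have hmono : ∀ (Z : EuclideanSpace ℝ (Fin (d+1)) → ℝ),
        (∀ t : ℝ, Integrable (fun X => if Real.arccos (X 0) ≤ t then Z X else 0) μ) →
        (∀ x, 0 ≤ Z x) →
        Monotone (fun t => ∫ X, (if Real.arccos (X 0) ≤ t then Z X else 0) ∂μ) := by
      intro Z hint hZ0 t1 t2 h12
      refine integral_mono (hint t1) (hint t2) fun X => ?_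
      dsimp only
      by_cases h : Real.arccos (X 0) ≤ t1
      · rw [if_pos h, if_pos (h.trans h12)]
      · rw [if_neg h]
        by_cases h2 : Real.arccos (X 0) ≤ t2
        · rw [if_pos h2]; exact hZ0 X
        · rw [if_neg h2]
    have hHpm : Monotone Hp := hmono _ hIp (fun x => le_max_right _ _)
    have hHmm : Monotone Hm := hmono _ hIm (fun x => le_max_right _ _)
    have hHeq : H = fun t => Hp t - Hm t := by
      funext t
      rw [hH, hHp, hHm]
      simp only
      rw [← integral_sub (hIp t) (hIm t)]
      refine integral_congr_ae (Filter.Eventually.of_forall fun X => ?_)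
      dsimp only
      by_cases h : Real.arccos (X 0) ≤ t
      · rw [if_pos h, if_pos h, if_pos h]
        rcases le_total (Y X) 0 with h' | h'
        · rw [max_eq_right h', max_eq_left (by linarith)]; ring
        · rw [max_eq_left h', max_eq_right (by linarith)]; ring
      · rw [if_neg h, if_neg h, if_neg h, sub_zero]
    rw [hHeq]
    exact (hHpm.measurable).sub (hHmm.measurable)
  -- bound on H
  have hHbound : ∀ t, |H t| ≤ C0 * (μ Set.univ).toReal := by
    intro t
    rw [hH]; simp only
    have hb : ∀ᵐ X ∂μ, ‖if Real.arccos (X 0) ≤ t then Y X else 0‖ ≤ C0 := by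
      filter_upwards [hae_sphere] with x hx
      rw [Real.norm_eq_abs]
      by_cases h : Real.arccos (x 0) ≤ t
      · rw [if_pos h]; exact hCs x hx
      · rw [if_neg h, abs_zero]; exact hC0nonneg
    simpa [Real.norm_eq_abs, measureReal_def] using norm_integral_le_of_norm_le_const hb
  -- properties of F
  have hFeven : ∀ T, F (-T) = F T := by
    intro T; rw [hF]; simp [mul_neg, neg_mul, Real.cos_neg]
  have hFshift : ∀ T, F (π - T) = (-1:ℝ)^n * F T := by
    intro T
    rw [hF]; simp only
    have h1 : (m:ℝ) * (π - T) = (m:ℝ) * π - (m:ℝ)*T := by ring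
    have h2 : (π - T) * ((n:ℝ) + (m:ℝ)) = ((n+m : ℕ):ℝ) * π - T * ((n:ℝ)+(m:ℝ)) := by
      push_cast; ring
    rw [h1, h2, Real.cos_nat_mul_pi_sub, Real.cos_nat_mul_pi_sub]
    have habs : |(-1:ℝ)^m * Real.cos ((m:ℝ)*T)| = |Real.cos ((m:ℝ)*T)| := by
      rw [abs_mul, abs_pow, abs_neg, abs_one, one_pow, one_mul]
    have hmm : ((-1:ℝ)^m) * ((-1:ℝ)^m) = 1 := by
      rw [← pow_add]; exact Even.neg_one_pow ⟨m, by ring⟩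
    rw [habs, pow_add]
    linear_combination ((-1:ℝ)^n * (|Real.cos ((m:ℝ)*T)| ^ α * Real.cos ((m:ℝ)*T)
      * Real.cos (T*((n:ℝ)+(m:ℝ))))) * hmm
  have hFb : ∀ T, |F T| ≤ 1 := by
    intro T
    rw [hF]; simp only [abs_mul]
    have h1 : |Real.cos ((m:ℝ)*T)| ≤ 1 := Real.abs_cos_le_one _
    have h2 : |Real.cos (T*((n:ℝ)+(m:ℝ)))| ≤ 1 := Real.abs_cos_le_one _
    have h3 : |Real.cos ((m:ℝ)*T)| ^ α ≤ 1 := Real.rpow_le_one (abs_nonneg _) h1 hα0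
    have h5 : (0:ℝ) ≤ |Real.cos ((m:ℝ)*T)| ^ α := Real.rpow_nonneg (abs_nonneg _) _
    have h4 : |(|Real.cos ((m:ℝ)*T)| ^ α)| = |Real.cos ((m:ℝ)*T)| ^ α := abs_of_nonneg h5
    rw [h4]
    have h6 : |Real.cos ((m:ℝ)*T)| ^ α * |Real.cos ((m:ℝ)*T)| ≤ 1 := by
      nlinarith [abs_nonneg (Real.cos ((m:ℝ)*T))]
    nlinarith [h6, mul_nonneg h5 (abs_nonneg (Real.cos ((m:ℝ)*T))),
      abs_nonneg (Real.cos (T*((n:ℝ)+(m:ℝ))))]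
  have hFcont : Continuous F := by
    rw [hF]
    refine Continuous.mul (Continuous.mul ?_ ?_) ?_
    · exact (continuous_abs.comp (Real.continuous_cos.comp
        (continuous_const.mul continuous_id))).rpow_const (fun x => Or.inr hα0)
    · exact Real.continuous_cos.comp (continuous_const.mul continuous_id)
    · exact Real.continuous_cos.comp (continuous_id.mul continuous_const)
  -- rewrite the inner integral
  have hinner : ∀ T : ℝ,
      (∫ X, (if Real.arccos (X 0) < π - |T| then
          |Real.cos (((d:ℝ) - 1) / 2 * T)| ^ α
            * Real.cos (((d:ℝ) - 1) / 2 * T)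
            * Real.cos (T * ((n:ℝ) + ((d:ℝ) - 1) / 2))
            * Y X
        else 0) ∂μ) = (-1:ℝ)^(n+1) * (F T * H |T|) := by
    intro T
    have hb : ∀ X : EuclideanSpace ℝ (Fin (d+1)),
        (if Real.arccos (X 0) < π - |T| then
          |Real.cos (((d:ℝ) - 1) / 2 * T)| ^ α
            * Real.cos (((d:ℝ) - 1) / 2 * T)
            * Real.cos (T * ((n:ℝ) + ((d:ℝ) - 1) / 2))
            * Y X
        else 0)
        = F T * (if Real.arccos (X 0) < π - |T| then Y X else 0) := by
      intro X
      rw [hm2, hF]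
      by_cases h : Real.arccos (X 0) < π - |T|
      · rw [if_pos h, if_pos h]
      · rw [if_neg h, if_neg h, mul_zero]
    calc (∫ X, (if Real.arccos (X 0) < π - |T| then
          |Real.cos (((d:ℝ) - 1) / 2 * T)| ^ α
            * Real.cos (((d:ℝ) - 1) / 2 * T)
            * Real.cos (T * ((n:ℝ) + ((d:ℝ) - 1) / 2))
            * Y X
        else 0) ∂μ)
        = ∫ X, F T * (if Real.arccos (X 0) < π - |T| then Y X else 0) ∂μ :=
          integral_congr_ae (Filter.Eventually.of_forall hb)
      _ = F T * G (π - |T|) := by rw [integral_const_mul, hG]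
      _ = (-1:ℝ)^(n+1) * (F T * H |T|) := by
          rw [hGH (π - |T|), show π - (π - |T|) = |T| by ring]; ring
  rw [MeasureTheory.integral_congr_ae (Filter.Eventually.of_forall
    (fun T => hinner T) : _ =ᵐ[volume.restrict (Set.Icc (-π) π)] _)]
  rw [MeasureTheory.integral_const_mul]
  -- now it remains to handle the T-integral
  set φ : ℝ → ℝ := fun T => F T * H |T| with hφ
  have hφmeas : Measurable φ := (hFcont.measurable).mul (hHmeas.comp continuous_abs.measurable)
  have hφb : ∀ T, |φ T| ≤ C0 * (μ Set.univ).toReal := by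
    intro T
    rw [hφ]; simp only [abs_mul]
    have h1 := hHbound |T|
    have h2 := hFb T
    nlinarith [abs_nonneg (H |T|), abs_nonneg (F T)]
  have hφint : ∀ a b : ℝ, IntervalIntegrable φ volume a b := by
    intro a b
    rw [intervalIntegrable_iff]
    refine Integrable.mono' (g := fun _ => C0 * (μ Set.univ).toReal)
      (integrableOn_const measure_Ioc_lt_top.ne)
      hφmeas.aestronglyMeasurable ?_
    exact Filter.Eventually.of_forall fun T => by rw [Real.norm_eq_abs]; exact hφb T
  have hFGFH : ∫ T in (0:ℝ)..π, F T * G T = ∫ T in (0:ℝ)..π, F T * H T := by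
    apply intervalIntegral.integral_congr_ae
    filter_upwards [hGHae] with t ht _
    rw [ht]
  have hJ : ∫ T in (0:ℝ)..π, φ T = 0 := by
    have e1 : ∫ T in (0:ℝ)..π, φ T = ∫ T in (0:ℝ)..π, F T * H T := by
      refine intervalIntegral.integral_congr fun T hT => ?_
      have hT' : T ∈ Set.Icc (0:ℝ) π := by
        rwa [Set.uIcc_of_le (le_of_lt Real.pi_pos)] at hT
      rw [hφ]; simp only
      rw [abs_of_nonneg hT'.1]
    have hHpi : ∀ T : ℝ, H (π - T) = (-1:ℝ)^(n+1) * G T := by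
      intro T
      have h := hGH T
      have h2 : ((-1:ℝ)^(n+1)) * ((-1:ℝ)^(n+1)) = 1 := by
        rw [← pow_add]; exact Even.neg_one_pow ⟨n+1, by ring⟩
      calc H (π - T) = 1 * H (π - T) := (one_mul _).symm
        _ = (-1:ℝ)^(n+1) * ((-1:ℝ)^(n+1) * H (π - T)) := by rw [← mul_assoc, h2]
        _ = (-1:ℝ)^(n+1) * G T := by rw [← h]
    have e3 : ∀ T : ℝ, F (π - T) * H (π - T) = - (F T * G T) := by
      intro T
      rw [hFshift, hHpi]
      have hsign : ((-1:ℝ)^n) * ((-1:ℝ)^(n+1)) = -1 := by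
        rw [← pow_add]; exact Odd.neg_one_pow ⟨n, by ring⟩
      calc ((-1:ℝ)^n * F T) * ((-1:ℝ)^(n+1) * G T)
          = (((-1:ℝ)^n) * ((-1:ℝ)^(n+1))) * (F T * G T) := by ring
        _ = - (F T * G T) := by rw [hsign]; ring
    have e2 : ∫ T in (0:ℝ)..π, F T * H T = ∫ T in (0:ℝ)..π, F (π - T) * H (π - T) := by
      rw [intervalIntegral.integral_comp_sub_left (fun T => F T * H T) π]
      norm_num
    have e4 : ∫ T in (0:ℝ)..π, F (π - T) * H (π - T) = - ∫ T in (0:ℝ)..π, F T * G T := by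
      rw [← intervalIntegral.integral_neg]
      exact intervalIntegral.integral_congr fun T _ => e3 T
    have e5 : ∫ T in (0:ℝ)..π, F T * H T = - ∫ T in (0:ℝ)..π, F T * H T := by
      calc ∫ T in (0:ℝ)..π, F T * H T = ∫ T in (0:ℝ)..π, F (π - T) * H (π - T) := e2
        _ = - ∫ T in (0:ℝ)..π, F T * G T := e4
        _ = - ∫ T in (0:ℝ)..π, F T * H T := by rw [hFGFH]
    have : ∫ T in (0:ℝ)..π, F T * H T = 0 := by linarith
    rw [e1, this]
  have hneg : ∫ T in (-π : ℝ)..0, φ T = ∫ T in (0:ℝ)..π, φ T := by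
    have h2 : ∀ x : ℝ, φ (-x) = φ x := by
      intro x; rw [hφ]; simp only; rw [hFeven, abs_neg]
    have h := intervalIntegral.integral_comp_neg (a := (0:ℝ)) (b := π) (f := φ)
    rw [intervalIntegral.integral_congr (fun x _ => h2 x)] at h
    norm_num at h
    exact h.symm
  rw [MeasureTheory.integral_Icc_eq_integral_Ioc,
    ← intervalIntegral.integral_of_le (by linarith [Real.pi_pos] : (-π:ℝ) ≤ π),
    ← intervalIntegral.integral_add_adjacent_intervals (hφint (-π) 0) (hφint 0 π),
    hneg, hJ]
  norm_num
end
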